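/- Let Υ be a connected Cayley graph Cay(H;S) of a finite group H such that S contains at least three elements, at least one of which belongs to the center Z(H), and let T(Γ,ρ;Υ) be a generalized truncation of a finite |H|-regular graph Γ by Υ. Then every automorphism of T(Γ,ρ;Υ) leaves the natural partition P_Γ invariant, and the entire automorphism group Aut(T(Γ,ρ;Υ)) projects injectively onto a subgroup of Aut(Γ). -/

import Mathlib

open SimpleGraph

variable {V W : Type*}

/-- The generalized truncation `T(Γ,ρ;Υ)` of a graph `Γ` by a graph `Υ`,
with respect to a labeling `ρ` of the darts of `Γ` by vertices of `Υ`. -/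
def trunc (Γ : SimpleGraph V) (Υ : SimpleGraph W)
    (ρ : ∀ u w : V, Γ.Adj u w → W) : SimpleGraph (V × W) where
  Adj x y := (x.1 = y.1 ∧ Υ.Adj x.2 y.2) ∨
    (∃ h : Γ.Adj x.1 y.1, x.2 = ρ x.1 y.1 h ∧ y.2 = ρ y.1 x.1 h.symm)
  symm := ⟨by
    rintro ⟨u, i⟩ ⟨w, j⟩ (⟨h1, h2⟩ | ⟨h, h1, h2⟩)
    · exact Or.inl ⟨h1.symm, h2.symm⟩
    · exact Or.inr ⟨h.symm, h2, h1⟩⟩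
  loopless := ⟨by
    rintro ⟨u, i⟩ (⟨_, h⟩ | ⟨h, _⟩)
    · exact Υ.loopless.irrefl _ h
    · exact Γ.loopless.irrefl _ h⟩

/-- `ρ` is a vertex-neighborhood labeling of `Γ`: for every vertex `u`, the restriction
of `ρ` to the darts emanating from `u` is a bijection onto the vertex set of `Υ`. -/
def IsVNLabeling (Γ : SimpleGraph V) (ρ : ∀ u w : V, Γ.Adj u w → W) : Prop :=
  ∀ u : V, ∀ i : W, ∃! w : V, ∃ h : Γ.Adj u w, ρ u w h = i

/-- A permutation of the vertices is an automorphism of the graph. -/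
def IsAut (Γ : SimpleGraph V) (π : Equiv.Perm V) : Prop :=
  ∀ a b : V, Γ.Adj (π a) (π b) ↔ Γ.Adj a b

/-- The automorphism group of a graph, as a subgroup of the symmetric group. -/
def autG (Γ : SimpleGraph V) : Subgroup (Equiv.Perm V) where
  carrier := {π | IsAut Γ π}
  one_mem' := by intro a b; rfl
  mul_mem' := by
    intro f g hf hg a b
    exact (hf (g a) (g b)).trans (hg a b)
  inv_mem' := by
    intro f hf a b
    conv_rhs => rw [← (show f (f⁻¹ a) = a from f.apply_symm_apply a), ← (show f (f⁻¹ b) = b from f.apply_symm_apply b)]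
    exact (hf _ _).symm

/-- The Cayley graph `Cay(H;S)`: `a` is adjacent to `b` iff `b = s * a` for some `s ∈ S`
(for `S` closed under inverses and not containing the identity, `fromRel` introduces
no change). -/
def cayley (H : Type*) [Group H] (S : Set H) : SimpleGraph H :=
  SimpleGraph.fromRel (fun a b => ∃ s ∈ S, b = s * a)
section Aux

variable {H : Type*} [Group H] {S : Set H}

lemma cay_adj_of (hSone : (1 : H) ∉ S) {t : H} (ht : t ∈ S) (a : H) :
    (cayley H S).Adj a (t * a) := by
  have hne : a ≠ t * a := by
    intro h
    have h1 : t = 1 := mul_eq_right.mp h.symm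
    exact hSone (h1 ▸ ht)
  exact ⟨hne, Or.inl ⟨t, ht, rfl⟩⟩

lemma cay_adj_elim (hSinv : ∀ s ∈ S, s⁻¹ ∈ S) {a b : H}
    (h : (cayley H S).Adj a b) : ∃ t ∈ S, b = t * a := by
  obtain ⟨-, ⟨t, ht, rfl⟩ | ⟨t, ht, heq⟩⟩ := h
  · exact ⟨t, ht, rfl⟩
  · exact ⟨t⁻¹, hSinv t ht, by rw [heq, inv_mul_cancel_left]⟩

lemma exists_partner (hScard : 3 ≤ S.ncard)
    (hScentral : ∃ s ∈ S, s ∈ Subgroup.center H) {t : H} (ht : t ∈ S) :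
    ∃ r ∈ S, r * t = t * r ∧ r ≠ t ∧ r * t ≠ 1 := by
  obtain ⟨s, hs, hcent⟩ := hScentral
  by_cases hc : t = s ∨ t = s⁻¹
  · have htc : t ∈ Subgroup.center H := by
      rcases hc with rfl | rfl
      · exact hcent
      · exact (Subgroup.center H).inv_mem hcent
    have hex : ∃ r ∈ S, r ≠ t ∧ r ≠ t⁻¹ := by
      by_contra hcon
      push_neg at hcon
      have hsub : S ⊆ {t, t⁻¹} := by
        intro x hx
        rcases eq_or_ne x t with rfl | hxt
        · exact Set.mem_insert _ _
        · exact Set.mem_insert_iff.mpr (Or.inr (hcon x hx hxt))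
      have h2 : S.ncard ≤ ({t, t⁻¹} : Set H).ncard :=
        Set.ncard_le_ncard hsub ((Set.finite_singleton _).insert _)
      have h3 : ({t, t⁻¹} : Set H).ncard ≤ 2 := by
        calc ({t, t⁻¹} : Set H).ncard ≤ ({t⁻¹} : Set H).ncard + 1 := Set.ncard_insert_le _ _
        _ ≤ 2 := by rw [Set.ncard_singleton]
      omega
    obtain ⟨r, hr, hrt, hrt'⟩ := hex
    refine ⟨r, hr, Subgroup.mem_center_iff.mp htc r, hrt, ?_⟩
    intro h1
    exact hrt' (eq_inv_of_mul_eq_one_left h1)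
  · push_neg at hc
    refine ⟨s, hs, (Subgroup.mem_center_iff.mp hcent t).symm, fun h => hc.1 h.symm, ?_⟩
    intro h1
    have : t = s⁻¹ := eq_inv_of_mul_eq_one_right h1
    exact hc.2 this

end Aux
section Aux2

variable {Γ : SimpleGraph V} {Υ : SimpleGraph W} {ρ : ∀ u w : V, Γ.Adj u w → W}

lemma blue_no_c4 (hρ : IsVNLabeling Γ ρ)
    {a b c d : V × W}
    (hab : (trunc Γ Υ ρ).Adj a b) (hbc : (trunc Γ Υ ρ).Adj b c)
    (hcd : (trunc Γ Υ ρ).Adj c d) (hda : (trunc Γ Υ ρ).Adj d a)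
    (hac : a ≠ c) (hbd : b ≠ d) (hbcne : b ≠ c)
    (hblue : a.1 ≠ b.1) : False := by
  obtain ⟨u, i⟩ := a
  obtain ⟨w, j⟩ := b
  obtain ⟨x, k⟩ := c
  obtain ⟨y, l⟩ := d
  -- a-b is blue
  obtain ⟨h, hi, hj⟩ : ∃ h : Γ.Adj u w, i = ρ u w h ∧ j = ρ w u h.symm := by
    rcases hab with ⟨h1, -⟩ | hh
    · exact absurd h1 hblue
    · exact hh
  rcases hbc with ⟨h1, -⟩ | ⟨h', hj', hk'⟩
  · -- b-c red : w = x
    simp only at h1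
    subst h1
    rcases hcd with ⟨h2, -⟩ | ⟨h'', hk'', hl''⟩
    · -- c-d red : w = y
      simp only at h2
      subst h2
      -- d-a must be blue
      rcases hda with ⟨h3, -⟩ | ⟨h''', hl''', hi'''⟩
      · exact hblue h3.symm
      · -- l = ρ w u _ = j
        have : l = j := hl'''.trans hj.symm
        exact hbd (by simp [this])
    · -- c-d blue : k = ρ w y h''
      rcases hda with ⟨h3, -⟩ | ⟨h''', hl''', hi'''⟩
      · -- d-a red: y = u
        simp only at h3
        subst h3
        have : k = j := hk''.trans hj.symm
        exact hbcne (by simp [this])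
      · -- d-a blue: i = ρ u y _, also i = ρ u w h, uniqueness gives y = w
        have hyw : y = w := by
          refine (hρ u i).unique ⟨h'''.symm, hi'''.symm⟩ ⟨h, hi.symm⟩
        subst hyw
        have : l = j := hl'''.trans hj.symm
        exact hbd (by simp [this])
  · -- b-c blue : j = ρ w x h', uniqueness at (w, j) gives x = u
    have hxu : x = u := by
      refine (hρ w j).unique ⟨h', hj'.symm⟩ ⟨h.symm, hj.symm⟩
    subst hxu
    have : k = i := hk'.trans hi.symm
    exact hac (by simp [this])

end Aux2
section Aux3

variable {H : Type*} [Group H] {S : Set H}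
variable {Γ : SimpleGraph V} {ρ : ∀ u w : V, Γ.Adj u w → H}

lemma red_block (hSinv : ∀ s ∈ S, s⁻¹ ∈ S) (hSone : (1 : H) ∉ S)
    (hScard : 3 ≤ S.ncard) (hScentral : ∃ s ∈ S, s ∈ Subgroup.center H)
    (hρ : IsVNLabeling Γ ρ) {π : Equiv.Perm (V × H)}
    (hπ : IsAut (trunc Γ (cayley H S) ρ) π)
    (u : V) {i j : H} (hij : (cayley H S).Adj i j) :
    (π (u, i)).1 = (π (u, j)).1 := by
  by_contra hne
  obtain ⟨t, ht, rfl⟩ := cay_adj_elim hSinv hij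
  obtain ⟨r, hr, hcomm, hrt, hrt1⟩ := exists_partner hScard hScentral ht
  have hkl : r * (t * i) = t * (r * i) := by
    rw [← mul_assoc, hcomm, mul_assoc]
  have h1 : (trunc Γ (cayley H S) ρ).Adj (u, i) (u, t * i) := Or.inl ⟨rfl, hij⟩
  have h2 : (trunc Γ (cayley H S) ρ).Adj (u, t * i) (u, r * (t * i)) :=
    Or.inl ⟨rfl, cay_adj_of hSone hr _⟩
  have h3 : (trunc Γ (cayley H S) ρ).Adj (u, r * (t * i)) (u, r * i) := by
    refine Or.inl ⟨rfl, ?_⟩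
    rw [hkl]
    exact (cay_adj_of hSone ht (r * i)).symm
  have h4 : (trunc Γ (cayley H S) ρ).Adj (u, r * i) (u, i) :=
    Or.inl ⟨rfl, (cay_adj_of hSone hr i).symm⟩
  refine blue_no_c4 hρ ((hπ _ _).mpr h1) ((hπ _ _).mpr h2) ((hπ _ _).mpr h3)
    ((hπ _ _).mpr h4) ?_ ?_ ?_ hne
  · intro h
    have := π.injective h
    have h5 : i = r * (t * i) := by simpa using this
    rw [← mul_assoc] at h5
    exact hrt1 (mul_eq_right.mp h5.symm)
  · intro h
    have := π.injective h
    have h5 : t * i = r * i := by simpa using this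
    exact hrt (mul_right_cancel h5).symm
  · intro h
    have := π.injective h
    have h5 : t * i = r * (t * i) := by simpa using this
    exact hSone (mul_eq_right.mp h5.symm ▸ hr)

lemma block_const (hSinv : ∀ s ∈ S, s⁻¹ ∈ S) (hSone : (1 : H) ∉ S)
    (hScard : 3 ≤ S.ncard) (hScentral : ∃ s ∈ S, s ∈ Subgroup.center H)
    (hconn : (cayley H S).Connected)
    (hρ : IsVNLabeling Γ ρ) {π : Equiv.Perm (V × H)}
    (hπ : IsAut (trunc Γ (cayley H S) ρ) π)
    (u : V) (i j : H) : (π (u, i)).1 = (π (u, j)).1 := by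
  obtain ⟨wlk⟩ := hconn.preconnected i j
  induction wlk with
  | nil => rfl
  | cons hadj p ih =>
      exact (red_block hSinv hSone hScard hScentral hρ hπ u hadj).trans ih

end Aux3
/-- Let `Υ = Cay(H;S)` be a connected Cayley graph of a finite group `H`
where `S` has at least three elements, at least one of them central in `H`, and let
`T(Γ,ρ;Υ)` be a generalized truncation of a finite `|H|`-regular graph `Γ` by `Υ`.
Then every automorphism of `T(Γ,ρ;Υ)` leaves the natural partition invariant, and
`Aut(T(Γ,ρ;Υ))` projects injectively onto a subgroup of `Aut(Γ)`. -/
theorem stmt4 {V H : Type*} [Fintype V] [DecidableEq V] [Fintype H] [DecidableEq H]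
    [Group H] (S : Set H)
    (hSinv : ∀ s ∈ S, s⁻¹ ∈ S) (hSone : (1 : H) ∉ S) (hScard : 3 ≤ S.ncard)
    (hScentral : ∃ s ∈ S, s ∈ Subgroup.center H)
    (hconn : (cayley H S).Connected)
    (Γ : SimpleGraph V) [DecidableRel Γ.Adj]
    (hreg : Γ.IsRegularOfDegree (Fintype.card H))
    (ρ : ∀ u w : V, Γ.Adj u w → H) (hρ : IsVNLabeling Γ ρ) :
    (∀ π ∈ autG (trunc Γ (cayley H S) ρ), ∀ u : V, ∃ u' : V, ∀ i : H, (π (u, i)).1 = u') ∧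
    ∃ F : autG (trunc Γ (cayley H S) ρ) →* Equiv.Perm V, Function.Injective F ∧
      (∀ π : autG (trunc Γ (cayley H S) ρ), (F π : Equiv.Perm V) ∈ autG Γ) ∧
      (∀ (π : autG (trunc Γ (cayley H S) ρ)) (u : V) (i : H),
        ((π : Equiv.Perm (V × H)) (u, i)).1 = F π u) := by
  set T := trunc Γ (cayley H S) ρ with hT
  have hblock : ∀ π : Equiv.Perm (V × H), IsAut T π →
      ∀ u : V, ∀ i j : H, (π (u, i)).1 = (π (u, j)).1 := fun π hπ u i j =>
    block_const hSinv hSone hScard hScentral hconn hρ hπ u i j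
  have hinvmem : ∀ π : Equiv.Perm (V × H), IsAut T π → IsAut T π⁻¹ := fun π hπ =>
    (autG T).inv_mem hπ
  -- inverse block computation
  have hinv : ∀ (π : Equiv.Perm (V × H)), IsAut T π → ∀ u : V,
      (π⁻¹ ((π (u, 1)).1, 1)).1 = u := by
    intro π hπ u
    have h1 := hblock π⁻¹ (hinvmem π hπ) ((π (u, 1)).1) 1 ((π (u, 1)).2)
    rw [h1]
    simp
  constructor
  · intro π hπ u
    exact ⟨(π (u, 1)).1, fun i => hblock π hπ u i 1⟩
  -- the equiv on V induced by π
  have key : ∀ (π : Equiv.Perm (V × H)), IsAut T π → ∀ u w : V, Γ.Adj u w →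
      Γ.Adj ((π (u, 1)).1) ((π (w, 1)).1) := by
    intro π hπ u w h
    have hblueT : T.Adj (u, ρ u w h) (w, ρ w u h.symm) := Or.inr ⟨h, rfl, rfl⟩
    have himg := (hπ _ _).mpr hblueT
    rcases himg with ⟨heq, -⟩ | ⟨h', ha, hb⟩
    · -- red image: contradiction, would give u = w
      exfalso
      have h1 := hblock π⁻¹ (hinvmem π hπ) ((π (u, ρ u w h)).1)
        ((π (u, ρ u w h)).2) ((π (w, ρ w u h.symm)).2)
      nth_rewrite 2 [heq] at h1
      simp only [Prod.mk.eta, Equiv.Perm.inv_def, Equiv.symm_apply_apply] at h1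
      exact h.ne h1
    · rw [hblock π hπ u 1 (ρ u w h), hblock π hπ w 1 (ρ w u h.symm)]
      exact h'
  let e : autG T → Equiv.Perm V := fun π =>
    { toFun := fun u => ((π : Equiv.Perm (V × H)) (u, 1)).1
      invFun := fun u => (((π : Equiv.Perm (V × H))⁻¹) (u, 1)).1
      left_inv := by
        intro u
        show (((π : Equiv.Perm (V × H))⁻¹) (((π : Equiv.Perm (V × H)) (u, 1)).1, 1)).1 = u
        have h1 := hblock (π : Equiv.Perm (V × H))⁻¹ (hinvmem _ π.2)
          (((π : Equiv.Perm (V × H)) (u, 1)).1) 1 (((π : Equiv.Perm (V × H)) (u, 1)).2)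
        rw [h1]; simp
      right_inv := by
        intro u
        show ((π : Equiv.Perm (V × H)) ((((π : Equiv.Perm (V × H))⁻¹) (u, 1)).1, 1)).1 = u
        have h1 := hblock (π : Equiv.Perm (V × H)) π.2
          ((((π : Equiv.Perm (V × H))⁻¹) (u, 1)).1) 1
          ((((π : Equiv.Perm (V × H))⁻¹) (u, 1)).2)
        rw [h1]; simp }
  have hemul : ∀ π σ : autG T, e (π * σ) = e π * e σ := by
    intro π σ
    ext u
    show ((π : Equiv.Perm (V × H)) ((σ : Equiv.Perm (V × H)) (u, 1))).1
      = ((π : Equiv.Perm (V × H)) ((((σ : Equiv.Perm (V × H)) (u, 1)).1), 1)).1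
    rw [hblock (π : Equiv.Perm (V × H)) π.2 (((σ : Equiv.Perm (V × H)) (u, 1)).1) 1
      (((σ : Equiv.Perm (V × H)) (u, 1)).2)]
  refine ⟨MonoidHom.mk' e hemul, ?_, ?_, ?_⟩
  · -- injectivity
    refine (injective_iff_map_eq_one (MonoidHom.mk' e hemul)).mpr ?_
    intro π hπ1
    have hfix : ∀ u : V, ∀ i : H, ((π : Equiv.Perm (V × H)) (u, i)).1 = u := by
      intro u i
      have h1 : ((MonoidHom.mk' e hemul) π) u = u := by rw [hπ1]; rfl
      have h2 : ((π : Equiv.Perm (V × H)) (u, 1)).1 = u := h1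
      exact (hblock _ π.2 u i 1).trans h2
    have hfix2 : ∀ u : V, ∀ i : H, (π : Equiv.Perm (V × H)) (u, i) = (u, i) := by
      intro u i
      obtain ⟨w, ⟨h, hi⟩, -⟩ := hρ u i
      have hblueT : T.Adj (u, i) (w, ρ w u h.symm) := Or.inr ⟨h, hi.symm, rfl⟩
      have himg := (π.2 _ _).mpr hblueT
      have hp : (π : Equiv.Perm (V × H)) (u, i)
          = (u, ((π : Equiv.Perm (V × H)) (u, i)).2) :=
        Prod.ext (hfix u i) rfl
      have hq : (π : Equiv.Perm (V × H)) (w, ρ w u h.symm)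
          = (w, ((π : Equiv.Perm (V × H)) (w, ρ w u h.symm)).2) :=
        Prod.ext (hfix w (ρ w u h.symm)) rfl
      rw [hp, hq] at himg
      rcases himg with ⟨heq, -⟩ | ⟨h', ha, -⟩
      · exact absurd heq h.ne
      · have : ((π : Equiv.Perm (V × H)) (u, i)).2 = i := ha.trans hi
        rw [hp, this]
    apply Subtype.ext
    apply Equiv.ext
    intro x
    obtain ⟨u, i⟩ := x
    exact hfix2 u i
  · -- image in autG Γ
    intro π
    intro a b
    constructor
    · intro h'
      have h2 := key _ (hinvmem _ π.2) _ _ h'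
      have ha := hinv _ π.2 a
      have hb := hinv _ π.2 b
      show Γ.Adj a b
      rw [← ha, ← hb]
      exact h2
    · intro h'
      exact key _ π.2 a b h'
  · intro π u i
    exact hblock _ π.2 u i 1
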